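/- Let k ≥ 2 be an integer and P an integer polynomial of degree k with leading coefficient ℓ. Then for any positive integer q and any δ > 0, |∑_{x<q} e(P(x)/q)| = O_k( q · (gcd(q, ℓ)/q^{1-δ})^{1/2^{k-1}} ), where e(t) = exp(2πit). For k = 2 the statement also holds with δ = 0. -/

import Mathlib

open Finset Complex Real

set_option maxHeartbeats 800000
section WeylProofAux
noncomputable section
namespace WeylAux
open Polynomial



variable (q : ℕ)

def e1 (n : ℤ) : ℂ := Complex.exp (2 * Real.pi * Complex.I * n / q)

lemma e1_add (m n : ℤ) : e1 q (m + n) = e1 q m * e1 q n := by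
  rw [e1, e1, e1, ← Complex.exp_add]
  congr 1
  push_cast
  ring

lemma e1_abs (n : ℤ) : ‖e1 q n‖ = 1 := by
  have h : (2 * Real.pi * Complex.I * n / q) = ((2 * Real.pi * n / q : ℝ) : ℂ) * Complex.I := by
    push_cast; ring
  rw [e1, h, Complex.norm_exp]
  simp

lemma e1_mul_q (t : ℤ) (hq : 0 < q) : e1 q (q * t) = 1 := by
  have hq' : (q : ℂ) ≠ 0 := Nat.cast_ne_zero.2 hq.ne'
  have h : (2 * Real.pi * Complex.I * (q * t) / q) = t * (2 * Real.pi * Complex.I) := by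
    field_simp
  rw [e1]
  push_cast [h]
  exact Complex.exp_int_mul_two_pi_mul_I t

lemma e1_congr (hq : 0 < q) {m n : ℤ} (h : (q:ℤ) ∣ m - n) : e1 q m = e1 q n := by
  obtain ⟨t, ht⟩ := h
  have : m = n + q * t := by linarith
  rw [this, e1_add, e1_mul_q _ _ hq, mul_one]

lemma e1_eq_real (n : ℤ) : e1 q n = Complex.exp (((2 * Real.pi * n / q : ℝ) : ℂ) * Complex.I) := by
  rw [e1]; congr 1; push_cast; ring

lemma e1_conj (n : ℤ) : (starRingEnd ℂ) (e1 q n) = e1 q (-n) := by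
  rw [e1_eq_real, e1_eq_real, ← Complex.exp_conj, map_mul, Complex.conj_I, Complex.conj_ofReal]
  congr 1
  push_cast
  ring




def Dh (h : ℤ) (P : ℤ[X]) : ℤ[X] := taylor h P - P

lemma Dh_eval (h x : ℤ) (P : ℤ[X]) : (Dh h P).eval x = P.eval (x + h) - P.eval x := by
  simp [Dh, taylor_eval]

lemma hasse_eval_of_le {P : ℤ[X]} {n : ℕ} (hP : P.natDegree ≤ n + 1) (h : ℤ) :
    (hasseDeriv n P).eval h = P.coeff n + (n + 1) * P.coeff (n + 1) * h := by
  have hd : (hasseDeriv n P).natDegree < 2 :=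
    lt_of_le_of_lt ((natDegree_hasseDeriv_le P n).trans (by omega)) one_lt_two
  rw [eval_eq_sum_range' hd]
  rw [Finset.sum_range_succ, Finset.sum_range_succ, Finset.sum_range_zero]
  have h1 : (1 + n).choose n = n + 1 := by rw [Nat.add_comm]; exact Nat.choose_succ_self_right n
  simp only [hasseDeriv_coeff, zero_add, Nat.choose_self, pow_zero, pow_one, Nat.cast_one, h1]
  push_cast
  ring

lemma Dh_coeff {P : ℤ[X]} {n : ℕ} (hP : P.natDegree ≤ n + 1) (h : ℤ) :
    (Dh h P).coeff n = (n + 1) * h * P.coeff (n + 1) := by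
  rw [Dh, coeff_sub, taylor_coeff, hasse_eval_of_le hP]
  ring

lemma Dh_natDegree {P : ℤ[X]} {n : ℕ} (hP : P.natDegree ≤ n + 1) (h : ℤ) :
    (Dh h P).natDegree ≤ n := by
  rw [natDegree_le_iff_coeff_eq_zero]
  intro N hN
  rw [Dh, coeff_sub, taylor_coeff]
  rcases eq_or_lt_of_le (Nat.succ_le_of_lt hN) with hN1 | hN1
  · -- N = n + 1
    have hd : (hasseDeriv N P).natDegree < 1 := by
      have := natDegree_hasseDeriv_le P N
      omega
    rw [eval_eq_sum_range' hd, Finset.sum_range_one]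
    simp [hasseDeriv_coeff, sub_eq_zero]
  · -- N > n + 1
    have hc : P.coeff N = 0 := coeff_eq_zero_of_natDegree_lt (lt_of_le_of_lt hP hN1)
    have hd : (hasseDeriv N P).natDegree < 1 := by
      have := natDegree_hasseDeriv_le P N
      omega
    rw [eval_eq_sum_range' hd, Finset.sum_range_one]
    simp [hasseDeriv_coeff, hc]




lemma nat_div_dvd_div {a b c : ℕ} (h : a ∣ b) (hc : c ∣ a) : a / c ∣ b / c := by
  rcases Nat.eq_zero_or_pos c with rfl | hcpos
  · simp
  obtain ⟨t, rfl⟩ := h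
  obtain ⟨s, rfl⟩ := hc
  rw [Nat.mul_div_cancel_left s hcpos, Nat.mul_assoc, Nat.mul_div_cancel_left _ hcpos]
  exact Dvd.intro t rfl

lemma sum_zmod {M : Type*} [AddCommMonoid M] (q : ℕ) [NeZero q] (f : ℕ → M) :
    ∑ x : ZMod q, f x.val = ∑ i ∈ Finset.range q, f i := by
  refine Finset.sum_nbij' (fun x => x.val) (fun i => (i : ZMod q)) ?_ ?_ ?_ ?_ ?_
  · intro x _; exact Finset.mem_range.2 (ZMod.val_lt x)
  · intro i _; exact Finset.mem_univ _
  · intro x _; exact ZMod.natCast_rightInverse x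
  · intro i hi; exact ZMod.val_cast_of_lt (Finset.mem_range.1 hi)
  · intro x _; rfl

lemma filter_dvd_eq (q d : ℕ) (hd : 0 < d) (hdq : d ∣ q) :
    (Finset.range q).filter (fun h => d ∣ h) = (Finset.range (q / d)).image (· * d) := by
  ext h
  simp only [Finset.mem_filter, Finset.mem_range, Finset.mem_image]
  constructor
  · rintro ⟨h1, m, rfl⟩
    exact ⟨m, by rw [Nat.lt_div_iff_mul_lt' hdq]; omega, by ring⟩
  · rintro ⟨m, hm, rfl⟩
    constructor
    · calc m * d < q / d * d := (Nat.mul_lt_mul_right hd).2 hm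
        _ ≤ q := Nat.div_mul_le_self q d
    · exact dvd_mul_left d m

lemma card_filter_dvd (q d : ℕ) (hd : 0 < d) (hdq : d ∣ q) :
    ((Finset.range q).filter (fun h => d ∣ h)).card = q / d := by
  rw [filter_dvd_eq q d hd hdq, Finset.card_image_of_injective _ (fun a b hab => by
    simpa using Nat.eq_of_mul_eq_mul_right hd hab), Finset.card_range]

lemma dvd_of_dvd_mul (q m h : ℕ) (hq : 0 < q) (hdvd : q ∣ h * m) :
    q / Nat.gcd q m ∣ h := by
  rcases Nat.eq_zero_or_pos m with rfl | hm
  · simp [Nat.gcd_zero_right, Nat.div_self hq]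
  have hg : 0 < Nat.gcd q m := Nat.gcd_pos_of_pos_left m hq
  have h1 : q / Nat.gcd q m ∣ h * (m / Nat.gcd q m) := by
    have h2 : h * (m / Nat.gcd q m) = h * m / Nat.gcd q m := by
      rw [Nat.mul_div_assoc h (Nat.gcd_dvd_right q m)]
    rw [h2]
    exact nat_div_dvd_div hdvd (Nat.gcd_dvd_left q m)
  exact (Nat.coprime_div_gcd_div_gcd hg).dvd_of_dvd_mul_right h1

lemma count_dvd_mul (q m : ℕ) (hq : 0 < q) :
    ((Finset.range q).filter (fun h => q ∣ h * m)).card ≤ Nat.gcd q m := by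
  have hg : 0 < Nat.gcd q m := Nat.gcd_pos_of_pos_left m hq
  calc ((Finset.range q).filter (fun h => q ∣ h * m)).card
      ≤ ((Finset.range q).filter (fun h => q / Nat.gcd q m ∣ h)).card := by
        apply Finset.card_le_card
        intro h hh
        simp only [Finset.mem_filter] at hh ⊢
        exact ⟨hh.1, dvd_of_dvd_mul q m h hq hh.2⟩
    _ = q / (q / Nat.gcd q m) := card_filter_dvd _ _ (Nat.div_pos (Nat.le_of_dvd hq (Nat.gcd_dvd_left q m)) hg) (Nat.div_dvd_of_dvd (Nat.gcd_dvd_left q m))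
    _ = Nat.gcd q m := Nat.div_div_self (Nat.gcd_dvd_left q m) hq.ne'

lemma gcd_sum (q : ℕ) (hq : 0 < q) :
    ∑ h ∈ Finset.range q, Nat.gcd q h ≤ q * q.divisors.card := by
  have key : ∀ h ∈ Finset.range q, Nat.gcd q h
      = ∑ d ∈ q.divisors, if Nat.gcd q h = d then d else 0 := by
    intro h _
    rw [Finset.sum_ite_eq q.divisors (Nat.gcd q h) (fun x => x)]
    simp [Nat.mem_divisors, Nat.gcd_dvd_left, hq.ne']
  rw [Finset.sum_congr rfl key, Finset.sum_comm]
  have bound : ∀ d ∈ q.divisors,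
      (∑ h ∈ Finset.range q, if Nat.gcd q h = d then d else 0) ≤ q := by
    intro d hd
    obtain ⟨hdq, -⟩ := Nat.mem_divisors.1 hd
    have hdpos : 0 < d := Nat.pos_of_dvd_of_pos hdq hq
    calc (∑ h ∈ Finset.range q, if Nat.gcd q h = d then d else 0)
        ≤ ∑ h ∈ Finset.range q, if d ∣ h then d else 0 := by
          apply Finset.sum_le_sum
          intro h _
          by_cases hgcd : Nat.gcd q h = d
          · simp [hgcd, hgcd ▸ Nat.gcd_dvd_right q h]
          · simp only [hgcd, if_false]; positivity
      _ = ((Finset.range q).filter (fun h => d ∣ h)).card * d := by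
          rw [Finset.sum_ite, Finset.sum_const, Finset.sum_const]
          simp [mul_comm]
      _ = q / d * d := by rw [card_filter_dvd q d hdpos hdq]
      _ = q := Nat.div_mul_cancel hdq
  calc (∑ d ∈ q.divisors, ∑ h ∈ Finset.range q, if Nat.gcd q h = d then d else 0)
      ≤ ∑ _d ∈ q.divisors, q := Finset.sum_le_sum bound
    _ = q.divisors.card * q := by rw [Finset.sum_const, smul_eq_mul]
    _ = q * q.divisors.card := mul_comm _ _





lemma pow_factor_bound (ε : ℝ) (hε : 0 < ε) :
    ∃ C0 : ℝ, 1 ≤ C0 ∧ ∀ a : ℕ, (a + 1 : ℝ) ≤ C0 * (2 : ℝ) ^ ((a : ℝ) * ε) := by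
  refine ⟨max 1 (2 / (ε * Real.log 2)), le_max_left _ _, fun a => ?_⟩
  have hlog : 0 < Real.log 2 := Real.log_pos one_lt_two
  have h2 : (2 : ℝ) ^ ((a : ℝ) * ε) = Real.exp ((a : ℝ) * ε * Real.log 2) := by
    rw [Real.rpow_def_of_pos two_pos, mul_comm]
  rcases Nat.eq_zero_or_pos a with rfl | ha
  · have h0 : ((0:ℕ):ℝ) * ε = 0 := by norm_num
    rw [h0, Real.rpow_zero, mul_one]
    simpa using le_max_left (1:ℝ) (2 / (ε * Real.log 2))
  · have h3 : (a : ℝ) * ε * Real.log 2 ≤ Real.exp ((a : ℝ) * ε * Real.log 2) :=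
      (Real.add_one_le_exp _).trans' (by linarith)
    have ha1 : (1 : ℝ) ≤ a := Nat.one_le_cast.2 ha
    have hC : 2 / (ε * Real.log 2) ≤ max 1 (2 / (ε * Real.log 2)) := le_max_right _ _
    have hpos : 0 < ε * Real.log 2 := by positivity
    calc (a + 1 : ℝ) ≤ 2 * a := by linarith
      _ = (2 / (ε * Real.log 2)) * ((a : ℝ) * ε * Real.log 2) := by field_simp
      _ ≤ (2 / (ε * Real.log 2)) * Real.exp ((a : ℝ) * ε * Real.log 2) := by
          apply mul_le_mul_of_nonneg_left h3 (by positivity)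
      _ ≤ max 1 (2 / (ε * Real.log 2)) * Real.exp ((a : ℝ) * ε * Real.log 2) := by
          apply mul_le_mul_of_nonneg_right hC (Real.exp_nonneg _)
      _ = max 1 (2 / (ε * Real.log 2)) * (2 : ℝ) ^ ((a : ℝ) * ε) := by rw [h2]

/-- Divisor bound: τ(n) ≤ C·n^ε. -/
lemma divisor_bound (ε : ℝ) (hε : 0 < ε) :
    ∃ C : ℝ, 0 < C ∧ ∀ n : ℕ, n ≠ 0 → (n.divisors.card : ℝ) ≤ C * (n : ℝ) ^ ε := by
  obtain ⟨C0, hC0, hC0b⟩ := pow_factor_bound ε hε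
  obtain ⟨n₀, hn₀⟩ := exists_nat_ge ((2 : ℝ) ^ (1 / ε))
  refine ⟨C0 ^ n₀, by positivity, fun n hn => ?_⟩
  -- τ(n) = ∏ (a_p + 1)
  have hτ : (n.divisors.card : ℝ) = ∏ p ∈ n.primeFactors, ((n.factorization p : ℝ) + 1) := by
    rw [Nat.card_divisors hn]
    push_cast
    rfl
  -- n^ε = ∏ p^(a_p ε)
  have hnf : (n : ℝ) ^ ε = ∏ p ∈ n.primeFactors, (p : ℝ) ^ ((n.factorization p : ℝ) * ε) := by
    conv_lhs => rw [← Nat.factorization_prod_pow_eq_self hn]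
    rw [Nat.prod_factorization_eq_prod_primeFactors]
    push_cast
    rw [← Real.finset_prod_rpow _ _ (fun p _ => by positivity) ε]
    apply Finset.prod_congr rfl
    intro p hp
    rw [← Real.rpow_natCast (p:ℝ) (n.factorization p), ← Real.rpow_mul (by positivity)]
  -- pointwise bound
  set c : ℕ → ℝ := fun p => if p < n₀ then C0 else 1 with hc
  have hpt : ∀ p ∈ n.primeFactors, ((n.factorization p : ℝ) + 1)
      ≤ c p * (p : ℝ) ^ ((n.factorization p : ℝ) * ε) := by
    intro p hp
    have hp2 : 2 ≤ p := (Nat.prime_of_mem_primeFactors hp).two_le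
    by_cases hsmall : p < n₀
    · simp only [hc, hsmall, if_true]
      calc ((n.factorization p : ℝ) + 1) ≤ C0 * (2:ℝ) ^ ((n.factorization p : ℝ) * ε) :=
            hC0b _
        _ ≤ C0 * (p : ℝ) ^ ((n.factorization p : ℝ) * ε) := by
            apply mul_le_mul_of_nonneg_left _ (by linarith)
            apply Real.rpow_le_rpow (by norm_num) (by exact_mod_cast Nat.cast_le.2 hp2) (by positivity)
    · simp only [hc, hsmall, if_false, one_mul]
      set a := n.factorization p
      have hpn₀ : ((2:ℝ)^((1:ℝ)/ε)) ≤ (p : ℝ) :=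
        le_trans hn₀ (Nat.cast_le.2 (not_lt.1 hsmall))
      have h1 : (a + 1 : ℝ) ≤ (2:ℝ) ^ (a : ℝ) := by
        rw [Real.rpow_natCast]
        exact_mod_cast Nat.succ_le_of_lt (Nat.lt_two_pow_self)
      have h2 : (2:ℝ) ^ (a:ℝ) = ((2:ℝ) ^ ((1:ℝ)/ε)) ^ ((a:ℝ) * ε) := by
        rw [← Real.rpow_mul (by norm_num)]
        congr 1
        field_simp
      calc (a + 1 : ℝ) ≤ ((2:ℝ) ^ ((1:ℝ)/ε)) ^ ((a:ℝ) * ε) := by rw [← h2]; exact h1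
        _ ≤ (p : ℝ) ^ ((a:ℝ) * ε) :=
            Real.rpow_le_rpow (by positivity) hpn₀ (by positivity)
  -- combine
  have hmono : (n.divisors.card : ℝ)
      ≤ (∏ p ∈ n.primeFactors, c p) * ∏ p ∈ n.primeFactors, (p : ℝ) ^ ((n.factorization p : ℝ) * ε) := by
    rw [hτ, ← Finset.prod_mul_distrib]
    exact Finset.prod_le_prod (fun p _ => by positivity) hpt
  have hcprod : (∏ p ∈ n.primeFactors, c p) ≤ C0 ^ n₀ := by
    have h1 : (∏ p ∈ n.primeFactors, c p)
        = C0 ^ ((n.primeFactors.filter (· < n₀)).card) := by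
      rw [← Finset.prod_filter_mul_prod_filter_not n.primeFactors (· < n₀)]
      have e1 : ∏ p ∈ n.primeFactors.filter (· < n₀), c p
          = C0 ^ ((n.primeFactors.filter (· < n₀)).card) := by
        rw [Finset.prod_congr rfl (fun p hp => ?_), Finset.prod_const]
        simp only [hc]
        rw [if_pos (Finset.mem_filter.1 hp).2]
      have e2 : ∏ p ∈ n.primeFactors.filter (fun p => ¬ p < n₀), c p = 1 := by
        rw [Finset.prod_congr rfl (fun p hp => ?_), Finset.prod_const_one]
        simp only [hc]
        rw [if_neg (Finset.mem_filter.1 hp).2]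
      rw [e1, e2, mul_one]
    rw [h1]
    apply pow_le_pow_right₀ hC0
    calc (n.primeFactors.filter (· < n₀)).card ≤ (Finset.range n₀).card := by
          apply Finset.card_le_card
          intro p hp
          exact Finset.mem_range.2 (Finset.mem_filter.1 hp).2
      _ = n₀ := Finset.card_range n₀
  calc (n.divisors.card : ℝ)
      ≤ (∏ p ∈ n.primeFactors, c p) * ∏ p ∈ n.primeFactors, (p : ℝ) ^ ((n.factorization p : ℝ) * ε) := hmono
    _ ≤ C0 ^ n₀ * ∏ p ∈ n.primeFactors, (p : ℝ) ^ ((n.factorization p : ℝ) * ε) := by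
        apply mul_le_mul_of_nonneg_right hcprod
        exact Finset.prod_nonneg (fun p _ => by positivity)
    _ = C0 ^ n₀ * (n : ℝ) ^ ε := by rw [← hnf]

section Core
variable (q : ℕ) [NeZero q]

def Sq (R : ℤ[X]) : ℂ := ∑ x : ZMod q, e1 q (R.eval (x.val : ℤ))

def W : ℕ → ℤ[X] → ℝ
  | 0, R => ‖Sq q R‖
  | (j+1), R => ∑ h : ZMod q, W j (Dh (h.val : ℤ) R)

def Mc : ℕ → ℤ → ℝ
  | 0, c => if (q:ℤ) ∣ c then 1 else 0
  | (j+1), c => ∑ h : ZMod q, Mc j ((h.val : ℤ) * c)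

lemma hq0 : 0 < q := Nat.pos_of_ne_zero (NeZero.ne q)

lemma e1_eval_congr (R : ℤ[X]) {a b : ℤ} (hab : (q:ℤ) ∣ a - b) :
    e1 q (R.eval a) = e1 q (R.eval b) :=
  e1_congr q (hq0 q) (dvd_trans hab (sub_dvd_eval_sub a b R))

lemma step (R : ℤ[X]) :
    ‖Sq q R‖ ^ 2 ≤ ∑ h : ZMod q, ‖Sq q (Dh (h.val : ℤ) R)‖ := by
  have key : Sq q R * (starRingEnd ℂ) (Sq q R) = ∑ h : ZMod q, Sq q (Dh (h.val : ℤ) R) := by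
    rw [Sq, map_sum, Finset.sum_mul_sum]
    have inner : ∀ y : ZMod q, ∀ x : ZMod q,
        e1 q (R.eval (x.val : ℤ)) * (starRingEnd ℂ) (e1 q (R.eval (y.val : ℤ)))
        = e1 q (R.eval (x.val : ℤ) - R.eval (y.val : ℤ)) := by
      intro y x
      rw [e1_conj, ← e1_add, sub_eq_add_neg]
    calc ∑ x : ZMod q, ∑ y : ZMod q,
          e1 q (R.eval (x.val : ℤ)) * (starRingEnd ℂ) (e1 q (R.eval (y.val : ℤ)))
        = ∑ y : ZMod q, ∑ x : ZMod q, e1 q (R.eval (x.val : ℤ) - R.eval (y.val : ℤ)) := by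
          rw [Finset.sum_comm]
          exact Finset.sum_congr rfl fun y _ => Finset.sum_congr rfl fun x _ => inner y x
      _ = ∑ y : ZMod q, ∑ h : ZMod q, e1 q ((Dh (h.val : ℤ) R).eval (y.val : ℤ)) := by
          refine Finset.sum_congr rfl fun y _ => ?_
          rw [← Equiv.sum_comp (Equiv.addLeft y) (fun x : ZMod q =>
            e1 q (R.eval (x.val : ℤ) - R.eval (y.val : ℤ)))]
          refine Finset.sum_congr rfl fun h _ => ?_
          have hval : (q:ℤ) ∣ ((Equiv.addLeft y h).val : ℤ) - ((y.val : ℤ) + (h.val : ℤ)) := by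
            have : (Equiv.addLeft y h).val = (y.val + h.val) % q := by
              simp [Equiv.addLeft, ZMod.val_add]
            rw [this]
            push_cast
            have h3 : ((y.val:ℤ) + h.val) % q - ((y.val:ℤ) + h.val)
                = -((q:ℤ) * (((y.val:ℤ) + h.val) / q)) := by
              rw [Int.emod_def]; ring
            rw [h3]
            exact (dvd_neg).2 (Dvd.intro _ rfl)
          have h1 : e1 q (R.eval ((Equiv.addLeft y h).val : ℤ) - R.eval (y.val : ℤ))
              = e1 q (R.eval ((y.val : ℤ) + (h.val : ℤ)) - R.eval (y.val : ℤ)) := by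
            have h2 := e1_eval_congr q R hval
            rw [show R.eval ((Equiv.addLeft y h).val : ℤ) - R.eval (y.val:ℤ)
                = (R.eval ((Equiv.addLeft y h).val : ℤ)) + (- R.eval (y.val:ℤ)) by ring,
              show R.eval ((y.val:ℤ) + (h.val:ℤ)) - R.eval (y.val:ℤ)
                = (R.eval ((y.val:ℤ) + (h.val:ℤ))) + (- R.eval (y.val:ℤ)) by ring,
              e1_add, e1_add, h2]
          rw [h1, Dh_eval]
      _ = ∑ h : ZMod q, Sq q (Dh (h.val : ℤ) R) := by
          rw [Finset.sum_comm]; rfl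
  have habs : ‖Sq q R‖ ^ 2 = ‖Sq q R * (starRingEnd ℂ) (Sq q R)‖ := by
    rw [norm_mul, Complex.norm_conj, sq]
  rw [habs, key]
  exact (norm_sum_le _ _)

lemma W_nonneg (j : ℕ) (R : ℤ[X]) : 0 ≤ W q j R := by
  induction j generalizing R with
  | zero => exact norm_nonneg _
  | succ j ih => exact Finset.sum_nonneg fun h _ => ih _

lemma iter (j : ℕ) (R : ℤ[X]) :
    (q:ℝ) ^ (j+1) * ‖Sq q R‖ ^ (2^j) ≤ (q:ℝ) ^ (2^j) * W q j R := by
  induction j generalizing R with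
  | zero => simp [W]
  | succ j ih =>
    have hqR : (0:ℝ) < q := by exact_mod_cast hq0 q
    have habs : (0:ℝ) ≤ ‖Sq q R‖ := norm_nonneg _
    have hx : ∀ h : ZMod q, (0:ℝ) ≤ ‖Sq q (Dh (h.val : ℤ) R)‖ :=
      fun h => norm_nonneg _
    have h1 : ‖Sq q R‖ ^ (2^(j+1))
        ≤ (∑ h : ZMod q, ‖Sq q (Dh (h.val : ℤ) R)‖) ^ (2^j) := by
      rw [pow_succ', pow_mul]
      exact pow_le_pow_left₀ (by positivity) (step q R) _
    have h2 : (∑ h : ZMod q, ‖Sq q (Dh (h.val : ℤ) R)‖) ^ (2^j)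
        ≤ (q:ℝ) ^ (2^j - 1) * ∑ h : ZMod q, ‖Sq q (Dh (h.val : ℤ) R)‖ ^ (2^j) := by
      have hpm := pow_sum_div_card_le_sum_pow (s := Finset.univ)
        (f := fun h : ZMod q => ‖Sq q (Dh (h.val : ℤ) R)‖)
        (fun i _ => hx i) (2^j - 1)
      have hcard : ((Finset.univ : Finset (ZMod q)).card : ℝ) = (q:ℝ) := by
        rw [Finset.card_univ, ZMod.card]
      have hexp : 2^j - 1 + 1 = 2^j := Nat.succ_pred_eq_of_pos (Nat.two_pow_pos j)
      rw [hexp, hcard, div_le_iff₀ (by positivity)] at hpm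
      calc (∑ h : ZMod q, ‖Sq q (Dh (h.val : ℤ) R)‖) ^ (2^j)
          ≤ (∑ h : ZMod q, ‖Sq q (Dh (h.val : ℤ) R)‖ ^ (2^j)) * (q:ℝ) ^ (2^j-1) := hpm
        _ = (q:ℝ) ^ (2^j - 1) * ∑ h : ZMod q, ‖Sq q (Dh (h.val : ℤ) R)‖ ^ (2^j) :=
            mul_comm _ _
    have h3 : ∀ h : ZMod q, (q:ℝ)^(j+1) * ‖Sq q (Dh (h.val : ℤ) R)‖ ^ (2^j)
        ≤ (q:ℝ)^(2^j) * W q j (Dh (h.val : ℤ) R) := fun h => ih _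
    have hsum : (q:ℝ)^(j+1+1) * ((q:ℝ)^(2^j-1) * ∑ h : ZMod q, ‖Sq q (Dh (h.val : ℤ) R)‖ ^ (2^j))
        = (q:ℝ)^(2^j) * ∑ h : ZMod q, (q:ℝ)^(j+1) * ‖Sq q (Dh (h.val : ℤ) R)‖ ^ (2^j) := by
      rw [← mul_assoc, ← pow_add]
      have he : j+1+1 + (2^j - 1) = 2^j + (j+1) := by
        have : 1 ≤ 2^j := Nat.one_le_two_pow
        omega
      rw [he, pow_add, mul_assoc]
      congr 1
      exact Finset.mul_sum _ _ _
    have h2exp : (2:ℕ)^(j+1) = 2^j + 2^j := by rw [pow_succ]; ring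
    calc (q:ℝ)^(j+1+1) * ‖Sq q R‖ ^ (2^(j+1))
        ≤ (q:ℝ)^(j+1+1) * ((q:ℝ)^(2^j-1) * ∑ h : ZMod q, ‖Sq q (Dh (h.val : ℤ) R)‖ ^ (2^j)) :=
          mul_le_mul_of_nonneg_left (h1.trans h2) (by positivity)
      _ = (q:ℝ)^(2^j) * ∑ h : ZMod q, (q:ℝ)^(j+1) * ‖Sq q (Dh (h.val : ℤ) R)‖ ^ (2^j) := hsum
      _ ≤ (q:ℝ)^(2^j) * ∑ h : ZMod q, (q:ℝ)^(2^j) * W q j (Dh (h.val : ℤ) R) := by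
          apply mul_le_mul_of_nonneg_left (Finset.sum_le_sum fun h _ => h3 h) (by positivity)
      _ = (q:ℝ)^(2^(j+1)) * W q (j+1) R := by
          rw [← Finset.mul_sum, ← mul_assoc, ← pow_add, ← h2exp]
          rfl

lemma e1_zero : e1 q 0 = 1 := by
  rw [e1]
  norm_num [Complex.exp_zero]

lemma e1_eq_one_iff (n : ℤ) : e1 q n = 1 ↔ (q:ℤ) ∣ n := by
  have hq' : (q : ℂ) ≠ 0 := Nat.cast_ne_zero.2 (hq0 q).ne'
  have h2πI : (2:ℂ) * (Real.pi:ℂ) * Complex.I ≠ 0 := by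
    simp [Real.pi_ne_zero, Complex.I_ne_zero]
  constructor
  · intro h
    obtain ⟨m, hm⟩ := Complex.exp_eq_one_iff.1 (by rw [← e1]; exact h)
    have h1 : (n:ℂ) = (m:ℂ) * q := by
      field_simp at hm
      apply mul_left_cancel₀ h2πI
      linear_combination (2 * (Real.pi:ℂ) * Complex.I) * hm
    have h2 : (n:ℤ) = (q:ℤ) * m := by exact_mod_cast h1.trans (mul_comm _ _)
    exact ⟨m, h2⟩
  · rintro ⟨t, rfl⟩
    exact e1_mul_q q t (hq0 q)

lemma e1_pow_nat (c : ℤ) (i : ℕ) : e1 q (c * (i:ℤ)) = (e1 q c) ^ i := by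
  induction i with
  | zero => simpa using e1_zero q
  | succ i ih =>
    have : c * ((i:ℤ) + 1) = c * (i:ℤ) + c := by ring
    push_cast
    push_cast at ih
    rw [this, e1_add, ih, pow_succ]

lemma Sq_linear {R : ℤ[X]} (hR : R.natDegree ≤ 1) :
    ‖Sq q R‖ = if (q:ℤ) ∣ R.coeff 1 then (q:ℝ) else 0 := by
  have heval : ∀ x : ℤ, R.eval x = R.coeff 0 + R.coeff 1 * x := by
    intro x
    rw [eval_eq_sum_range' (lt_of_le_of_lt hR one_lt_two)]
    rw [show (2:ℕ) = 1 + 1 from rfl, Finset.sum_range_succ, Finset.sum_range_one]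
    ring
  have hsplit : Sq q R = e1 q (R.coeff 0) * ∑ x : ZMod q, e1 q (R.coeff 1 * (x.val:ℤ)) := by
    rw [Sq, Finset.mul_sum]
    refine Finset.sum_congr rfl fun x _ => ?_
    rw [heval, e1_add]
  rw [hsplit, norm_mul, e1_abs, one_mul]
  by_cases hdvd : (q:ℤ) ∣ R.coeff 1
  · rw [if_pos hdvd]
    have hone : ∀ x : ZMod q, e1 q (R.coeff 1 * (x.val:ℤ)) = 1 := by
      intro x
      rw [e1_eq_one_iff]
      exact Dvd.dvd.mul_right hdvd _
    rw [Finset.sum_congr rfl (fun x _ => hone x), Finset.sum_const, Finset.card_univ, ZMod.card]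
    simp
  · rw [if_neg hdvd]
    have hsum : ∑ x : ZMod q, e1 q (R.coeff 1 * (x.val:ℤ))
        = ∑ i ∈ Finset.range q, (e1 q (R.coeff 1))^i := by
      rw [sum_zmod q (fun i => e1 q (R.coeff 1 * (i:ℤ)))]
      exact Finset.sum_congr rfl fun i _ => e1_pow_nat q _ i
    have hne : e1 q (R.coeff 1) ≠ 1 := fun h => hdvd ((e1_eq_one_iff q _).1 h)
    have hgeom : (e1 q (R.coeff 1))^q = 1 := by
      rw [← e1_pow_nat, mul_comm, e1_mul_q q _ (hq0 q)]
    rw [hsum, geom_sum_eq hne q, hgeom]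
    simp

lemma W_le_M : ∀ (j : ℕ) (R : ℤ[X]), R.natDegree ≤ j + 1 →
    W q j R ≤ (q:ℝ) * Mc q j ((Nat.factorial (j+1) : ℤ) * R.coeff (j+1)) := by
  intro j
  induction j with
  | zero =>
    intro R hR
    rw [W, Sq_linear q hR, Mc]
    have h1 : (Nat.factorial 1 : ℤ) = 1 := rfl
    rw [h1, one_mul]
    split_ifs <;> simp
  | succ j ih =>
    intro R hR
    have hWs : W q (j+1) R = ∑ h : ZMod q, W q j (Dh (h.val:ℤ) R) := rfl
    have hMs : ∀ c : ℤ, Mc q (j+1) c = ∑ h : ZMod q, Mc q j ((h.val:ℤ) * c) := fun c => rfl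
    rw [hWs, hMs, Finset.mul_sum]
    apply Finset.sum_le_sum
    intro h _
    have hd := Dh_natDegree hR (h.val:ℤ)
    have hc := Dh_coeff hR (h.val:ℤ)
    have key := ih (Dh (h.val:ℤ) R) hd
    rw [hc] at key
    have harg : (Nat.factorial (j+1) : ℤ) * (((j:ℤ)+1+1) * (h.val:ℤ) * R.coeff (j+1+1))
        = (h.val:ℤ) * ((Nat.factorial (j+1+1) : ℤ) * R.coeff (j+1+1)) := by
      rw [Nat.factorial_succ (j+1)]
      push_cast
      ring
    rw [← harg]
    exact key

lemma Mc_le (j : ℕ) (c : ℤ) :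
    Mc q (j+1) c ≤ (q:ℝ)^j * ((q.divisors.card : ℝ))^j * (Int.gcd (q:ℤ) c : ℝ) := by
  have hq := hq0 q
  induction j generalizing c with
  | zero =>
    simp only [pow_zero, one_mul]
    have hMs : Mc q 1 c = ∑ h : ZMod q, Mc q 0 ((h.val:ℤ) * c) := rfl
    rw [hMs]
    have : ∀ h : ZMod q, Mc q 0 ((h.val:ℤ) * c)
        = if q ∣ h.val * c.natAbs then (1:ℝ) else 0 := by
      intro h
      rw [Mc]
      congr 1
      rw [eq_iff_iff, Int.natCast_dvd, Int.natAbs_mul, Int.natAbs_natCast]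
    rw [Finset.sum_congr rfl fun h _ => this h,
      sum_zmod q (fun i => if q ∣ i * c.natAbs then (1:ℝ) else 0)]
    rw [Finset.sum_boole]
    have := count_dvd_mul q c.natAbs hq
    have hgcd : Int.gcd (q:ℤ) c = Nat.gcd q c.natAbs := by
      rw [Int.gcd]
      simp
    rw [hgcd]
    exact_mod_cast this
  | succ j ih =>
    have hMs : Mc q (j+2) c = ∑ h : ZMod q, Mc q (j+1) ((h.val:ℤ) * c) := rfl
    set τ : ℝ := (q.divisors.card : ℝ) with hτ
    have hτ0 : 0 ≤ τ := Nat.cast_nonneg _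
    have hgcdmul : ∀ h : ZMod q, (Int.gcd (q:ℤ) ((h.val:ℤ) * c) : ℝ)
        ≤ (Nat.gcd q h.val : ℝ) * (Int.gcd (q:ℤ) c : ℝ) := by
      intro h
      have h1 : Int.gcd (q:ℤ) ((h.val:ℤ) * c) = Nat.gcd q (h.val * c.natAbs) := by
        unfold Int.gcd
        rw [Int.natAbs_mul]
        simp only [Int.natAbs_natCast]
      have h2 : Int.gcd (q:ℤ) c = Nat.gcd q c.natAbs := by
        unfold Int.gcd
        simp only [Int.natAbs_natCast]
      rw [h1, h2]
      have hdvd := Nat.gcd_mul_right_dvd_mul_gcd q h.val c.natAbs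
      have hpos : 0 < Nat.gcd q h.val * Nat.gcd q c.natAbs := by
        apply Nat.mul_pos (Nat.gcd_pos_of_pos_left _ hq) (Nat.gcd_pos_of_pos_left _ hq)
      exact_mod_cast Nat.le_of_dvd hpos hdvd
    have hsgcd : ∑ h : ZMod q, (Nat.gcd q h.val : ℝ) ≤ (q:ℝ) * τ := by
      rw [sum_zmod q (fun i => (Nat.gcd q i : ℝ))]
      have := gcd_sum q hq
      calc ∑ i ∈ Finset.range q, (Nat.gcd q i : ℝ)
          = ((∑ i ∈ Finset.range q, Nat.gcd q i : ℕ) : ℝ) := by push_cast; rfl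
        _ ≤ ((q * q.divisors.card : ℕ) : ℝ) := by exact_mod_cast this
        _ = (q:ℝ) * τ := by push_cast; rfl
    calc Mc q (j+2) c = ∑ h : ZMod q, Mc q (j+1) ((h.val:ℤ) * c) := hMs
      _ ≤ ∑ h : ZMod q, (q:ℝ)^j * τ^j * (Int.gcd (q:ℤ) ((h.val:ℤ) * c) : ℝ) :=
          Finset.sum_le_sum fun h _ => ih _
      _ ≤ ∑ h : ZMod q, (q:ℝ)^j * τ^j * ((Nat.gcd q h.val : ℝ) * (Int.gcd (q:ℤ) c : ℝ)) := by
          apply Finset.sum_le_sum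
          intro h _
          apply mul_le_mul_of_nonneg_left (hgcdmul h) (by positivity)
      _ = (q:ℝ)^j * τ^j * (Int.gcd (q:ℤ) c : ℝ) * ∑ h : ZMod q, (Nat.gcd q h.val : ℝ) := by
          rw [Finset.mul_sum]
          exact Finset.sum_congr rfl fun h _ => by ring
      _ ≤ (q:ℝ)^j * τ^j * (Int.gcd (q:ℤ) c : ℝ) * ((q:ℝ) * τ) := by
          apply mul_le_mul_of_nonneg_left hsgcd (by positivity)
      _ = (q:ℝ)^(j+1) * τ^(j+1) * (Int.gcd (q:ℤ) c : ℝ) := by ring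

lemma Mc_nonneg (j : ℕ) (c : ℤ) : 0 ≤ Mc q j c := by
  induction j generalizing c with
  | zero => rw [Mc]; split_ifs <;> norm_num
  | succ j ih => exact Finset.sum_nonneg fun h _ => ih _

end Core

end WeylAux
end
end WeylProofAux



open Finset Complex Real

/-- Lemma 3.1: Weyl-type bound for complete exponential sums with polynomial phase.
For fixed degree `k ≥ 2` and `δ > 0` (or `δ = 0` if `k = 2`) there is a constant
`Ck` (depending only on `k` and `δ`) such that for every integer polynomial `P`
of degree `k` with leading coefficient `ℓ` and every positive integer `q`,
`|∑_{x<q} e(P(x)/q)| ≤ Ck · q · (gcd(q,ℓ)/q^{1-δ})^{1/2^{k-1}}`. -/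
theorem poly_exp_sum_bound (k : ℕ) (hk : 2 ≤ k) (δ : ℝ)
    (hδ : 0 < δ ∨ (k = 2 ∧ δ = 0)) :
    ∃ Ck : ℝ, 0 < Ck ∧ ∀ (P : Polynomial ℤ), P.natDegree = k → ∀ q : ℕ, 0 < q →
      ‖∑ x ∈ range q, Complex.exp (2 * π * Complex.I * (P.eval (x : ℤ)) / q)‖ ≤
        Ck * q * ((Nat.gcd q P.leadingCoeff.natAbs : ℝ) / (q : ℝ) ^ (1 - δ))
          ^ ((1 : ℝ) / 2 ^ (k - 1)) := by

  have hδ0 : 0 ≤ δ := by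
    rcases hδ with h | ⟨-, h⟩
    exacts [h.le, le_of_eq h.symm]
  obtain ⟨t, rfl⟩ : ∃ t, k = t + 2 := ⟨k - 2, by omega⟩
  -- divisor bound constant
  obtain ⟨C1, hC1, hC1b⟩ : ∃ C1 : ℝ, 0 < C1 ∧ ∀ q : ℕ, 0 < q →
      ((q.divisors.card : ℝ)) ^ t ≤ C1 * (q : ℝ) ^ δ := by
    rcases Nat.eq_zero_or_pos t with rfl | htpos
    · refine ⟨1, one_pos, fun q hq => ?_⟩
      have h1 : (1:ℝ) ≤ (q:ℝ) := Nat.one_le_cast.2 hq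
      have := Real.rpow_le_rpow_of_exponent_le h1 hδ0
      rw [Real.rpow_zero] at this
      simpa using this
    · have hδpos : 0 < δ := by
        rcases hδ with h | ⟨hk2, _⟩
        · exact h
        · omega
      obtain ⟨C, hC, hCb⟩ := WeylAux.divisor_bound (δ / t) (by positivity)
      refine ⟨C ^ t, by positivity, fun q hq => ?_⟩
      calc ((q.divisors.card : ℝ)) ^ t ≤ (C * (q:ℝ) ^ (δ / t)) ^ t :=
            pow_le_pow_left₀ (Nat.cast_nonneg _) (hCb q hq.ne') t
        _ = C ^ t * ((q:ℝ) ^ (δ / t)) ^ t := mul_pow _ _ _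
        _ = C ^ t * (q:ℝ) ^ δ := by
            rw [← Real.rpow_natCast ((q:ℝ) ^ (δ / t)) t, ← Real.rpow_mul (Nat.cast_nonneg q)]
            congr 1
            field_simp
  have hke : t + 2 - 1 = t + 1 := rfl
  rw [hke]
  set m : ℕ := t + 1 with hmdef
  set K : ℝ := ((t+2).factorial : ℝ) * C1 with hK
  have hKpos : 0 < K := by positivity
  refine ⟨K ^ ((1:ℝ) / 2 ^ m), Real.rpow_pos_of_pos hKpos _, ?_⟩
  intro P hP q hq
  haveI : NeZero q := ⟨hq.ne'⟩
  have hq0R : (0:ℝ) < q := Nat.cast_pos.2 hq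
  set τ : ℝ := (q.divisors.card : ℝ) with hτ
  have hτ0 : (0:ℝ) ≤ τ := Nat.cast_nonneg _
  set G : ℕ := Nat.gcd q P.leadingCoeff.natAbs with hG
  have hG1 : 1 ≤ G := Nat.gcd_pos_of_pos_left _ hq
  have hGc : G = Nat.gcd q (P.coeff (t+2)).natAbs := by
    rw [hG, Polynomial.leadingCoeff, hP]
  -- identify the sum
  have hSq : (∑ x ∈ range q, Complex.exp (2 * ↑π * Complex.I * (((P.eval (x:ℤ)) : ℤ) : ℂ) / q))
      = WeylAux.Sq q P := by
    rw [WeylAux.Sq, WeylAux.sum_zmod q (fun i => WeylAux.e1 q (P.eval (i:ℤ)))]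
    exact Finset.sum_congr rfl fun x _ => rfl
  rw [hSq]
  set A : ℝ := ‖WeylAux.Sq q P‖ with hA
  have hA0 : 0 ≤ A := norm_nonneg _
  -- main chain
  have hiter := WeylAux.iter q m P
  have hdeg : P.natDegree ≤ m + 1 := by rw [hP]
  have hWb := WeylAux.W_le_M q m P hdeg
  have hMcb := WeylAux.Mc_le q t ((Nat.factorial (m+1) : ℤ) * P.coeff (m+1))
  have hmeq : t + 1 = m := rfl
  have hgcd : (Int.gcd (q:ℤ) ((Nat.factorial (m+1) : ℤ) * P.coeff (m+1)) : ℝ)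
      ≤ ((t+2).factorial : ℝ) * (G : ℝ) := by
    have hnat : Int.gcd (q:ℤ) ((Nat.factorial (m+1) : ℤ) * P.coeff (m+1))
        = Nat.gcd q (Nat.factorial (m+1) * (P.coeff (m+1)).natAbs) := by
      unfold Int.gcd
      rw [Int.natAbs_mul]
      simp only [Int.natAbs_natCast]
    have hdvd1 := Nat.gcd_mul_right_dvd_mul_gcd q (Nat.factorial (m+1)) (P.coeff (m+1)).natAbs
    have hdvd2 : Nat.gcd q (Nat.factorial (m+1)) * Nat.gcd q (P.coeff (m+1)).natAbs
        ∣ Nat.factorial (m+1) * Nat.gcd q (P.coeff (m+1)).natAbs :=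
      Nat.mul_dvd_mul_right (Nat.gcd_dvd_right _ _) _
    have hle : Nat.gcd q (Nat.factorial (m+1) * (P.coeff (m+1)).natAbs)
        ≤ Nat.factorial (m+1) * Nat.gcd q (P.coeff (m+1)).natAbs :=
      Nat.le_of_dvd (Nat.mul_pos (Nat.factorial_pos _) (Nat.gcd_pos_of_pos_left _ hq))
        (hdvd1.trans hdvd2)
    rw [hnat]
    have : m + 1 = t + 2 := rfl
    rw [this] at hle ⊢
    rw [hGc]
    exact_mod_cast hle
  have hMcle : WeylAux.Mc q m ((Nat.factorial (m+1) : ℤ) * P.coeff (m+1))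
      ≤ (q:ℝ)^t * τ^t * (((t+2).factorial : ℝ) * (G:ℝ)) := by
    refine hMcb.trans ?_
    exact mul_le_mul_of_nonneg_left hgcd (by positivity)
  -- combine
  have hone_le : 1 ≤ (2:ℕ)^m := Nat.one_le_two_pow
  have main1 : (q:ℝ)^(m+1) * A^(2^m)
      ≤ (q:ℝ)^(m+1) * ((q:ℝ)^(2^m - 1) * (τ^t * (((t+2).factorial : ℝ) * (G:ℝ)))) := by
    calc (q:ℝ)^(m+1) * A^(2^m) ≤ (q:ℝ)^(2^m) * WeylAux.W q m P := hiter
      _ ≤ (q:ℝ)^(2^m) * ((q:ℝ) * WeylAux.Mc q m ((Nat.factorial (m+1) : ℤ) * P.coeff (m+1))) :=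
          mul_le_mul_of_nonneg_left hWb (by positivity)
      _ ≤ (q:ℝ)^(2^m) * ((q:ℝ) * ((q:ℝ)^t * τ^t * (((t+2).factorial : ℝ) * (G:ℝ)))) :=
          mul_le_mul_of_nonneg_left (mul_le_mul_of_nonneg_left hMcle hq0R.le) (by positivity)
      _ = (q:ℝ)^(2^m + 1 + t) * (τ^t * (((t+2).factorial : ℝ) * (G:ℝ))) := by
          rw [pow_add, pow_add]
          ring
      _ = (q:ℝ)^(m+1) * ((q:ℝ)^(2^m - 1) * (τ^t * (((t+2).factorial : ℝ) * (G:ℝ)))) := by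
          have he : (2:ℕ)^m + 1 + t = (m+1) + ((2:ℕ)^m - 1) := by omega
          rw [he, pow_add]
          ring
  have main2 : A^(2^m) ≤ (q:ℝ)^(2^m - 1) * (τ^t * (((t+2).factorial : ℝ) * (G:ℝ))) :=
    le_of_mul_le_mul_left main1 (by positivity)
  have main3 : A^(2^m) ≤ K * (q:ℝ)^(2^m) * ((G:ℝ) / (q:ℝ)^(1-δ)) := by
    have hτb : τ^t ≤ C1 * (q:ℝ)^δ := hC1b q hq
    have step1 : A^(2^m) ≤ (q:ℝ)^(2^m - 1) * ((C1 * (q:ℝ)^δ) * (((t+2).factorial : ℝ) * (G:ℝ))) := by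
      refine main2.trans ?_
      apply mul_le_mul_of_nonneg_left _ (by positivity)
      apply mul_le_mul_of_nonneg_right hτb (by positivity)
    refine step1.trans (le_of_eq ?_)
    have hrw : (q:ℝ)^(2^m) * ((G:ℝ) / (q:ℝ)^(1-δ)) = (q:ℝ)^(2^m - 1) * ((q:ℝ)^δ * (G:ℝ)) := by
      have hne : ((q:ℝ)^(1-δ)) ≠ 0 := (Real.rpow_pos_of_pos hq0R _).ne'
      have e1' : (q:ℝ)^((2:ℕ)^m) = (q:ℝ)^((2:ℕ)^m - 1) * (q:ℝ) := by
        rw [← pow_succ]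
        congr 1
        omega
      have e2 : (q:ℝ)^(1-δ) = (q:ℝ) / (q:ℝ)^δ := by
        rw [Real.rpow_sub hq0R, Real.rpow_one]
      rw [e1', e2]
      have hδne : ((q:ℝ)^δ) ≠ 0 := (Real.rpow_pos_of_pos hq0R _).ne'
      field_simp
    rw [hK]
    linear_combination (-(((t+2).factorial : ℝ) * C1)) * hrw
  -- take 2^m-th root
  have hXpos : (0:ℝ) < (G:ℝ) / (q:ℝ)^(1-δ) := by
    apply div_pos _ (Real.rpow_pos_of_pos hq0R _)
    exact_mod_cast hG1
  have hcast : ((2:ℝ)^m) = (((2:ℕ)^m : ℕ) : ℝ) := by push_cast; rfl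
  have hexp1 : ((((2:ℕ)^m : ℕ)) : ℝ) * ((1:ℝ) / 2^m) = 1 := by
    rw [hcast.symm]
    field_simp
  have hroot := Real.rpow_le_rpow (by positivity) main3
    (by positivity : (0:ℝ) ≤ (1:ℝ) / 2^m)
  have hlhs : (A^((2:ℕ)^m)) ^ ((1:ℝ) / 2^m) = A := by
    rw [← Real.rpow_natCast A ((2:ℕ)^m), ← Real.rpow_mul hA0, hexp1, Real.rpow_one]
  have hq2m : ((q:ℝ)^((2:ℕ)^m)) ^ ((1:ℝ) / 2^m) = (q:ℝ) := by
    rw [← Real.rpow_natCast (q:ℝ) ((2:ℕ)^m), ← Real.rpow_mul hq0R.le, hexp1, Real.rpow_one]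
  have hrhs : (K * (q:ℝ)^(2^m) * ((G:ℝ) / (q:ℝ)^(1-δ))) ^ ((1:ℝ) / 2^m)
      = K ^ ((1:ℝ)/2^m) * (q:ℝ) * ((G:ℝ) / (q:ℝ)^(1-δ)) ^ ((1:ℝ)/2^m) := by
    rw [Real.mul_rpow (by positivity) hXpos.le, Real.mul_rpow hKpos.le (by positivity), hq2m]
  rw [hlhs, hrhs] at hroot
  exact hroot
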